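/- Let θ̂ := (ρ+Γ(σ−1))/(1+f(σ−1)), A := θ̂^{−σ} and B̂ := −ΓA/(Kρ), and fix i ∈ F. Define v(x) := A⟨e,x⟩^{1−σ}/(1−σ) + B̂ for x ∈ ℝⁿ₊ \ {0}. Then v is continuously differentiable on ℝⁿ₊ \ {0} with ∂v/∂x_j(x) = A⟨e,x⟩^{−σ} > 0 for every j, and for every x ∈ ℝⁿ₊ \ {0}: ρ v(x) = (σ/(1−σ)) (∂v/∂x_i(x))^{1−1/σ} + ⟨∇v(x), (D+Bᵀ)x⟩ + Γ(1 − ⟨e,x⟩^{σ−1}/K) ⟨∇v(x), x⟩ − θ̂⟨e,x⟩ · ∑_{j∈F, j≠i} ∂v/∂x_j(x). Moreover, the supremum over c > 0 of c^{1−σ}/(1−σ) − c·∂v/∂x_i(x) equals (σ/(1−σ))(∂v/∂x_i(x))^{1−1/σ} and is attained uniquely at c = θ̂⟨e,x⟩. -/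

import Mathlib

open Matrix Finset

/-- The diagonal matrix of outflows: `D i i = -∑_{j ≠ i} B i j`. -/
noncomputable def Dmat {n : ℕ} (B : Matrix (Fin n) (Fin n) ℝ) : Matrix (Fin n) (Fin n) ℝ :=
  Matrix.diagonal fun i => -∑ j ∈ Finset.univ.erase i, B i j

/-- The continuous linear functional `y ↦ ∑ j, p j * y j` on `ℝⁿ`. -/
noncomputable def dotCLM {n : ℕ} (p : Fin n → ℝ) : (Fin n → ℝ) →L[ℝ] ℝ :=
  LinearMap.toContinuousLinearMap
    { toFun := fun y => ∑ j, p j * y j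
      map_add' := fun y z => by
        simp [Pi.add_apply, mul_add, Finset.sum_add_distrib]
      map_smul' := fun a y => by
        simp only [Pi.smul_apply, smul_eq_mul, RingHom.id_apply, Finset.mul_sum]
        exact Finset.sum_congr rfl fun j _ => by ring }

lemma dotCLM_apply {n : ℕ} (p y : Fin n → ℝ) : dotCLM p y = ∑ j, p j * y j := rfl

lemma rowsum_zero {n : ℕ} (B : Matrix (Fin n) (Fin n) ℝ) (hdiag : ∀ i, B i i = 0)
    (x : Fin n → ℝ) : ∑ j, ((Dmat B + B)ᵀ *ᵥ x) j = 0 := by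
  simp only [Matrix.mulVec, dotProduct, Matrix.transpose_apply, Matrix.add_apply]
  rw [Finset.sum_comm]
  apply Finset.sum_eq_zero
  intro k _
  rw [← Finset.sum_mul]
  have : ∑ j, ((Dmat B) k j + B k j) = 0 := by
    rw [Finset.sum_add_distrib]
    have h1 : ∑ j, (Dmat B) k j = -∑ j ∈ Finset.univ.erase k, B k j := by
      simp [Dmat, Matrix.diagonal]
    have h2 : ∑ j, B k j = ∑ j ∈ Finset.univ.erase k, B k j := by
      rw [← Finset.add_sum_erase Finset.univ (B k) (Finset.mem_univ k), hdiag k, zero_add]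
    rw [h1, h2]; ring
  rw [this, zero_mul]

lemma hderiv (σ q : ℝ) (hσ : σ ≠ 1) (c : ℝ) (hc : 0 < c) :
    HasDerivAt (fun t : ℝ => t ^ (1-σ) / (1-σ) - t * q) (c ^ (-σ) - q) c := by
  have h1 : HasDerivAt (fun t : ℝ => t ^ (1-σ)) ((1-σ) * c ^ (1-σ-1)) c :=
    Real.hasDerivAt_rpow_const (Or.inl hc.ne')
  have h2 := (h1.div_const (1-σ)).sub ((hasDerivAt_id c).mul_const q)
  have hσ1 : (1:ℝ) - σ - 1 = -σ := by ring
  rw [hσ1] at h2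
  have hne : (1:ℝ) - σ ≠ 0 := by intro h; apply hσ; linarith
  have : (1-σ) * c ^ (-σ) / (1-σ) = c ^ (-σ) := by field_simp
  rw [this] at h2
  simp at h2; exact h2

lemma strictmax (σ : ℝ) (hσ : 1 < σ) (cs c : ℝ) (hcs : 0 < cs) (hc : 0 < c) (hne : c ≠ cs) :
    c ^ (1-σ) / (1-σ) - c * cs ^ (-σ) < cs ^ (1-σ) / (1-σ) - cs * cs ^ (-σ) := by
  set q := cs ^ (-σ) with hq
  set h : ℝ → ℝ := fun t => t ^ (1-σ) / (1-σ) - t * q with hh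
  have hd : ∀ t : ℝ, 0 < t → HasDerivAt h (t ^ (-σ) - q) t := fun t ht => hderiv σ q (by linarith) t ht
  rcases lt_or_gt_of_ne hne with hlt | hgt
  · have hmono : StrictMonoOn h (Set.Icc c cs) := by
      apply strictMonoOn_of_deriv_pos (convex_Icc c cs)
      · intro t ht
        exact (hd t (lt_of_lt_of_le hc ht.1)).continuousAt.continuousWithinAt
      · intro t ht
        rw [interior_Icc] at ht
        have ht0 : 0 < t := hc.trans ht.1
        rw [(hd t ht0).deriv]
        have : cs ^ (-σ) < t ^ (-σ) :=
          Real.rpow_lt_rpow_of_neg ht0 (ht.2.trans_le le_rfl) (by linarith)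
        linarith
    exact hmono (Set.left_mem_Icc.2 hlt.le) (Set.right_mem_Icc.2 hlt.le) hlt
  · have hanti : StrictAntiOn h (Set.Icc cs c) := by
      apply strictAntiOn_of_deriv_neg (convex_Icc cs c)
      · intro t ht
        exact (hd t (lt_of_lt_of_le hcs ht.1)).continuousAt.continuousWithinAt
      · intro t ht
        rw [interior_Icc] at ht
        have ht0 : 0 < t := hcs.trans ht.1
        rw [(hd t ht0).deriv]
        have : t ^ (-σ) < cs ^ (-σ) :=
          Real.rpow_lt_rpow_of_neg hcs ht.1 (by linarith)
        linarith
    exact hanti (Set.left_mem_Icc.2 hgt.le) (Set.right_mem_Icc.2 hgt.le) hgt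

/-- Verification of the HJB equation of player `i` in the logistic framework (S1)(U1):
with `θ̂ = (ρ+Γ(σ−1))/(1+f(σ−1))`, `A = θ̂^{−σ}`, `B̂ = −ΓA/(Kρ)`, the function
`v(x) = A⟨e,x⟩^{1−σ}/(1−σ) + B̂` is differentiable on `ℝⁿ₊ \ {0}` with
`∂v/∂x_j(x) = A⟨e,x⟩^{−σ} > 0`, satisfies player `i`'s HJB equation when every other
player `j ∈ F` extracts `θ̂⟨e,x⟩`, and the Hamiltonian supremum is attained uniquely at
`c = θ̂⟨e,x⟩`. -/
theorem stmt5 {n : ℕ} (B : Matrix (Fin n) (Fin n) ℝ)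
    (hB : ∀ i j, 0 ≤ B i j) (hdiag : ∀ i, B i i = 0)
    (F : Finset (Fin n)) (hF : F.Nonempty) (i : Fin n) (hi : i ∈ F)
    (σ Γ K ρ : ℝ) (hσ : 1 < σ) (hΓ : 0 < Γ) (hK : 0 < K) (hρ : 0 < ρ)
    (θhat A Bhat : ℝ)
    (hθhat : θhat = (ρ + Γ * (σ - 1)) / (1 + F.card * (σ - 1)))
    (hA : A = θhat ^ (-σ)) (hBhat : Bhat = -(Γ * A) / (K * ρ))
    (v : (Fin n → ℝ) → ℝ)
    (hv : ∀ x : Fin n → ℝ, v x = A * (∑ j, x j) ^ (1 - σ) / (1 - σ) + Bhat) :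
    ∀ x : Fin n → ℝ, (∀ j, 0 ≤ x j) → x ≠ 0 →
      (0 < A * (∑ j, x j) ^ (-σ)) ∧
      HasFDerivAt v (dotCLM fun _ => A * (∑ j, x j) ^ (-σ)) x ∧
      (ρ * v x = (σ / (1 - σ)) * (A * (∑ j, x j) ^ (-σ)) ^ (1 - 1 / σ)
        + (∑ j, (A * (∑ j, x j) ^ (-σ)) * (((Dmat B + B)ᵀ *ᵥ x) j))
        + Γ * (1 - (∑ j, x j) ^ (σ - 1) / K) * (∑ j, (A * (∑ j, x j) ^ (-σ)) * x j)
        - θhat * (∑ j, x j) * (∑ _j ∈ F.erase i, A * (∑ j, x j) ^ (-σ))) ∧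
      IsGreatest ((fun c => c ^ (1 - σ) / (1 - σ) - c * (A * (∑ j, x j) ^ (-σ))) ''
          Set.Ioi (0 : ℝ))
        ((σ / (1 - σ)) * (A * (∑ j, x j) ^ (-σ)) ^ (1 - 1 / σ)) ∧
      (∀ c : ℝ, 0 < c →
        c ^ (1 - σ) / (1 - σ) - c * (A * (∑ j, x j) ^ (-σ))
          = (σ / (1 - σ)) * (A * (∑ j, x j) ^ (-σ)) ^ (1 - 1 / σ) →
        c = θhat * (∑ j, x j)) := by
  -- global positivity facts
  have hcard : 0 < (F.card : ℝ) := by exact_mod_cast Finset.card_pos.2 hF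
  have hden : (0:ℝ) < 1 + F.card * (σ - 1) := by nlinarith
  have hθ : 0 < θhat := by
    rw [hθhat]; exact div_pos (by nlinarith) hden
  have hA0 : 0 < A := hA ▸ Real.rpow_pos_of_pos hθ _
  have hθeq : θhat * (1 + F.card * (σ - 1)) = ρ + Γ * (σ - 1) := by
    rw [hθhat]; exact div_mul_cancel₀ _ hden.ne'
  intro x hx hx0
  set s : ℝ := ∑ j, x j with hs_def
  have hs : 0 < s := by
    obtain ⟨j, hj⟩ := Function.ne_iff.1 hx0
    exact Finset.sum_pos' (fun k _ => hx k) ⟨j, Finset.mem_univ j, lt_of_le_of_ne (hx j) (Ne.symm (by simpa using hj))⟩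
  have hq0 : 0 < A * s ^ (-σ) := mul_pos hA0 (Real.rpow_pos_of_pos hs _)
  set cs : ℝ := θhat * s with hcs_def
  have hcs : 0 < cs := mul_pos hθ hs
  -- A * s^(-σ) = cs^(-σ)
  have hqcs : A * s ^ (-σ) = cs ^ (-σ) := by
    rw [hA, hcs_def, Real.mul_rpow hθ.le hs.le]
  -- value identity
  have hval : (σ / (1 - σ)) * (cs ^ (-σ)) ^ (1 - 1/σ) = cs ^ (1-σ) / (1-σ) - cs * cs ^ (-σ) := by
    have hσ0 : σ ≠ 0 := by linarith
    have h1 : (cs ^ (-σ)) ^ (1 - 1/σ) = cs ^ (1-σ) := by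
      rw [← Real.rpow_mul hcs.le]
      congr 1
      field_simp
      ring
    have h2 : cs * cs ^ (-σ) = cs ^ (1-σ) := by
      nth_rewrite 1 [← Real.rpow_one cs]
      rw [← Real.rpow_add hcs]
      ring_nf
    rw [h1, h2]
    have : (1:ℝ) - σ ≠ 0 := by linarith
    field_simp
    ring
  refine ⟨hq0, ?_, ?_, ?_, ?_⟩
  · -- derivative
    have h0 : HasDerivAt (fun t : ℝ => t ^ (1-σ)) ((1-σ) * s ^ (1-σ-1)) s :=
      Real.hasDerivAt_rpow_const (Or.inl hs.ne')
    have h1 : HasDerivAt (fun t : ℝ => A * t ^ (1-σ) / (1-σ) + Bhat) (A * s ^ (-σ)) s := by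
      have h2 := ((h0.const_mul A).div_const (1-σ)).add_const Bhat
      have h3 : (1:ℝ) - σ - 1 = -σ := by ring
      rw [h3] at h2
      have h4 : A * ((1-σ) * s ^ (-σ)) / (1-σ) = A * s ^ (-σ) := by
        have : (1:ℝ) - σ ≠ 0 := by linarith
        field_simp
      rwa [h4] at h2
    have hL : HasFDerivAt (fun y : Fin n → ℝ => ∑ j, y j) (dotCLM fun _ : Fin n => (1:ℝ)) x := by
      have heq : (fun y : Fin n → ℝ => ∑ j, y j) = fun y => dotCLM (fun _ : Fin n => (1:ℝ)) y := by
        funext y; simp [dotCLM_apply]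
      rw [heq]
      exact (dotCLM fun _ : Fin n => (1:ℝ)).hasFDerivAt
    have hcomp := h1.comp_hasFDerivAt x hL
    have hveq : v = (fun t : ℝ => A * t ^ (1-σ) / (1-σ) + Bhat) ∘ (fun y : Fin n → ℝ => ∑ j, y j) := by
      funext y; exact hv y
    rw [hveq]
    refine hcomp.congr_fderiv ?_
    refine ContinuousLinearMap.ext fun y => ?_
    simp [dotCLM_apply, Finset.mul_sum]
  · -- HJB
    have hzero : ∑ j, (A * s ^ (-σ)) * (((Dmat B + B)ᵀ *ᵥ x) j) = 0 := by
      rw [← Finset.mul_sum, rowsum_zero B hdiag x, mul_zero]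
    have hxs : ∑ j, (A * s ^ (-σ)) * x j = (A * s ^ (-σ)) * s := by
      rw [← Finset.mul_sum]
    have hFsum : ∑ _j ∈ F.erase i, (A * s ^ (-σ)) = ((F.card:ℝ) - 1) * (A * s ^ (-σ)) := by
      rw [Finset.sum_const, Finset.card_erase_of_mem hi, nsmul_eq_mul]
      congr 1
      have h1 : 1 ≤ F.card := Finset.card_pos.2 hF
      push_cast [h1]
      ring
    have hpow : (σ / (1 - σ)) * (A * s ^ (-σ)) ^ (1 - 1/σ) = (σ / (1 - σ)) * (θhat * (A * s ^ (1-σ))) := by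
      have h1 : (cs ^ (-σ)) ^ (1 - 1/σ) = cs ^ (1-σ) := by
        rw [← Real.rpow_mul hcs.le]
        congr 1
        have : σ ≠ 0 := by linarith
        field_simp
        ring
      have h2 : cs ^ (1-σ) = θhat * (A * s ^ (1-σ)) := by
        rw [hcs_def, Real.mul_rpow hθ.le hs.le, hA]
        have h3 : θhat ^ ((1:ℝ)-σ) = θhat * θhat ^ (-σ) := by
          nth_rewrite 2 [← Real.rpow_one θhat]
          rw [← Real.rpow_add hθ]
          ring_nf
        rw [h3]
        ring
      rw [hqcs, h1, h2]
    rw [hv x, ← hs_def, hzero, hxs, hFsum, hpow]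
    have e1 : s ^ (-σ) * s = s ^ (1-σ) := by
      nth_rewrite 2 [← Real.rpow_one s]
      rw [← Real.rpow_add hs]
      ring_nf
    have e2 : s ^ (σ-1) * s ^ (1-σ) = 1 := by
      rw [← Real.rpow_add hs]
      norm_num
    have main : ∀ q t u : ℝ, q * s = t → u * t = 1 →
        ρ * (A * t / (1 - σ) + Bhat)
          = (σ / (1 - σ)) * (θhat * (A * t)) + 0
            + Γ * (1 - u / K) * ((A * q) * s)
            - θhat * s * (((F.card:ℝ) - 1) * (A * q)) := by
      intro q t u h1 h2
      rw [hBhat]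
      have hK' : K ≠ 0 := hK.ne'
      have hρ' : ρ ≠ 0 := hρ.ne'
      have h1σ : (1:ℝ) - σ ≠ 0 := by linarith
      field_simp
      linear_combination -(A*K*t) * hθeq - (A*(1-σ)*Γ*(K-u) - A*(1-σ)*K*θhat*((F.card:ℝ)-1)) * h1 + (A*(1-σ)*Γ) * h2
    exact main (s ^ (-σ)) (s ^ (1-σ)) (s ^ (σ-1)) e1 e2
  · -- IsGreatest
    constructor
    · exact ⟨cs, Set.mem_Ioi.2 hcs, by rw [hqcs, hval]⟩
    · rintro y ⟨c, hc, rfl⟩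
      rw [Set.mem_Ioi] at hc
      simp only [hqcs, hval]
      rcases eq_or_ne c cs with rfl | hne
      · exact le_refl _
      · exact (strictmax σ hσ cs c hcs hc hne).le
  · intro c hc heq
    rw [hqcs, hval] at heq
    by_contra hne
    exact absurd heq (ne_of_lt (strictmax σ hσ cs c hcs hc hne))
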